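/- arXiv:2409.04059 — 2 statements merged into one kernel-verified Lean document; each statement's English description precedes it below -/
import Mathlib

section
/- If R is a right H-ring, then every finitely generated right R-module is a co-Kasch module. -/
def IsCoKasch (R : Type*) [Ring R] (M : Type*) [AddCommGroup M] [Module R M] : Prop :=
  ∀ (K : Submodule R M) (S : Submodule R (M ⧸ K)), IsSimpleModule R S →
    ∃ f : M →ₗ[R] S, Function.Surjective f

/-- `E` together with the embedding `i : S →ₗ[R] E` is an injective hull of `S`:
`E` is injective and `i` is an essential monomorphism. -/
def IsInjectiveHull (R : Type*) [Ring R] {S E : Type*} [AddCommGroup S] [Module R S]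
    [AddCommGroup E] [Module R E] (i : S →ₗ[R] E) : Prop :=
  Module.Injective R E ∧ Function.Injective i ∧
    ∀ N : Submodule R E, N ≠ ⊥ → N ⊓ LinearMap.range i ≠ ⊥

/-- `R` is a right `H`-ring: `Hom(E(S₁), E(S₂)) = 0` for all nonisomorphic
simple modules `S₁`, `S₂`. -/
def IsHRing (R : Type u) [Ring R] : Prop :=
  ∀ (S₁ S₂ E₁ E₂ : Type u) [AddCommGroup S₁] [Module R S₁] [AddCommGroup S₂] [Module R S₂]
    [AddCommGroup E₁] [Module R E₁] [AddCommGroup E₂] [Module R E₂],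
    IsSimpleModule R S₁ → IsSimpleModule R S₂ → IsEmpty (S₁ ≃ₗ[R] S₂) →
    ∀ (i₁ : S₁ →ₗ[R] E₁) (i₂ : S₂ →ₗ[R] E₂),
      IsInjectiveHull R i₁ → IsInjectiveHull R i₂ →
      ∀ f : E₁ →ₗ[R] E₂, f = 0


universe u
section Aux
variable {R : Type u} [Ring R]

lemma aux_injective_of_retract {Q N : Type u} [AddCommGroup Q] [Module R Q]
    [AddCommGroup N] [Module R N] (hQ : Module.Injective R Q)
    (ι : N →ₗ[R] Q) (π : Q →ₗ[R] N) (hπι : ∀ x, π (ι x) = x) : Module.Injective R N := by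
  constructor
  intro X Y _ _ _ _ f hf g
  obtain ⟨h, hh⟩ := hQ.out f hf (ι ∘ₗ g)
  exact ⟨π ∘ₗ h, fun x => by simp [hh x, hπι]⟩

lemma aux_exists_coatom {M : Type u} [AddCommGroup M] [Module R M] [Module.Finite R M]
    (K : Submodule R M) (hK : K ≠ ⊤) : ∃ P, K ≤ P ∧ IsCoatom P := by
  have hcpt : IsCompactElement (⊤ : Submodule R M) :=
    (Submodule.fg_iff_compact _).mp (Module.Finite.fg_top)
  obtain ⟨m, hKm, hmax⟩ := zorn_le_nonempty₀ {P : Submodule R M | P ≠ ⊤ ∧ K ≤ P}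
    (fun c hcs hc y hy => by
      refine ⟨sSup c, ⟨?_, (hcs hy).2.trans (le_sSup hy)⟩, fun z hz => le_sSup hz⟩
      intro htop
      obtain ⟨p, hp, hle⟩ := ((CompleteLattice.isCompactElement_iff_le_of_directed_sSup_le
        (α := Submodule R M) ⊤).mp hcpt) c ⟨y, hy⟩ hc.directedOn (htop ▸ le_rfl)
      exact (hcs hp).1 (top_le_iff.mp hle)) K ⟨hK, le_rfl⟩
  refine ⟨m, hKm, hmax.prop.1, fun b hb => ?_⟩
  by_contra hbt
  exact hb.not_ge (hmax.le_of_ge ⟨hbt, hKm.trans hb.le⟩ hb.le)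

open CategoryTheory in
lemma aux_exists_hull (R : Type u) [Ring R] (A : Type u) [AddCommGroup A] [Module R A] :
    ∃ (E : Type u) (_ : AddCommGroup E) (_ : Module R E) (i : A →ₗ[R] E),
      IsInjectiveHull R i := by
  classical
  haveI : EnoughInjectives (ModuleCat.{u} R) := inferInstance
  set Qm : ModuleCat.{u} R := Injective.under (ModuleCat.of R A) with hQm
  set Q : Type u := Qm.carrier with hQ
  have hQinj : Module.Injective R Q :=
    Module.injective_module_of_injective_object R Q
      (inj := inferInstanceAs (Injective Qm))
  set j : A →ₗ[R] Q := (Injective.ι (ModuleCat.of R A) : ModuleCat.of R A ⟶ Qm).hom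
  have hj : Function.Injective j :=
    (ModuleCat.mono_iff_injective (Injective.ι (ModuleCat.of R A))).mp inferInstance
  -- A' is the image of A in Q
  set A' : Submodule R Q := LinearMap.range j with hA'
  set s : Set (Submodule R Q) :=
    {N | A' ≤ N ∧ ∀ X : Submodule R Q, X ≤ N → X ≠ ⊥ → X ⊓ A' ≠ ⊥} with hsdef
  have hA's : A' ∈ s := ⟨le_rfl, fun X hX hX0 => by rwa [inf_eq_left.mpr hX]⟩
  obtain ⟨N, hA'N, hNmax⟩ := zorn_le_nonempty₀ s (fun c hcs hc y hy => by
    refine ⟨sSup c, ⟨((hcs hy).1).trans (le_sSup hy), fun X hX hX0 => ?_⟩,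
      fun z hz => le_sSup hz⟩
    obtain ⟨x, hxX, hx0⟩ := (Submodule.ne_bot_iff X).mp hX0
    obtain ⟨p, hpc, hxp⟩ := (Submodule.mem_sSup_of_directed ⟨y, hy⟩ hc.directedOn).mp (hX hxX)
    have h1 : (R ∙ x) ≤ p := (Submodule.span_singleton_le_iff_mem x p).mpr hxp
    have h2 : (R ∙ x) ≠ ⊥ := by simpa [Submodule.span_singleton_eq_bot] using hx0
    have h3 := (hcs hpc).2 _ h1 h2
    intro h
    apply h3
    rw [eq_bot_iff, ← h]
    exact inf_le_inf_right _ ((Submodule.span_singleton_le_iff_mem x X).mpr hxX)) A' hA's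
  have hNs : N ∈ s := hNmax.prop
  -- a complement candidate C
  obtain ⟨C, -, hCmax⟩ := zorn_le_nonempty₀ {C : Submodule R Q | C ⊓ N = ⊥}
    (fun c hcs hc y hy => by
      refine ⟨sSup c, ?_, fun z hz => le_sSup hz⟩
      show sSup c ⊓ N = ⊥
      rw [eq_bot_iff]
      intro x hx
      obtain ⟨hx1, hx2⟩ := Submodule.mem_inf.mp hx
      obtain ⟨p, hpc, hxp⟩ := (Submodule.mem_sSup_of_directed ⟨y, hy⟩ hc.directedOn).mp hx1
      have hmem : x ∈ p ⊓ N := Submodule.mem_inf.mpr ⟨hxp, hx2⟩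
      have hpbot : p ⊓ N = ⊥ := hcs hpc
      rwa [hpbot] at hmem) ⊥ (by show ⊥ ⊓ N = ⊥; exact bot_inf_eq N)
  have hCN : C ⊓ N = ⊥ := hCmax.prop
  set ψ : N →ₗ[R] Q ⧸ C := C.mkQ.comp N.subtype with hψdef
  have hψinj : Function.Injective ψ := by
    rw [← LinearMap.ker_eq_bot, eq_bot_iff]
    intro x hx
    have hx' : (x : Q) ∈ C := by
      have := LinearMap.mem_ker.mp hx
      simpa [hψdef, Submodule.Quotient.mk_eq_zero] using this
    have hxm : (x : Q) ∈ C ⊓ N := Submodule.mem_inf.mpr ⟨hx', x.2⟩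
    rw [hCN] at hxm
    exact (Submodule.mem_bot R).mpr (Subtype.ext ((Submodule.mem_bot R).mp hxm))
  -- the image of N is essential in Q / C
  have hess : ∀ X : Submodule R (Q ⧸ C), X ≠ ⊥ → X ⊓ LinearMap.range ψ ≠ ⊥ := by
    intro X hX
    set D := X.comap C.mkQ with hD
    have hCD : C ≤ D := by
      intro x hx
      show C.mkQ x ∈ X
      rw [show C.mkQ x = 0 from (Submodule.Quotient.mk_eq_zero C).mpr hx]
      exact X.zero_mem
    have hCDne : C ≠ D := by
      intro h
      apply hX
      rw [← Submodule.map_comap_eq_of_surjective (Submodule.mkQ_surjective C) X, ← hD, ← h]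
      rw [eq_bot_iff]
      rintro z ⟨cc, hcc, rfl⟩
      simpa [Submodule.mem_bot, Submodule.Quotient.mk_eq_zero] using hcc
    have hDnt : D ⊓ N ≠ ⊥ := by
      intro h
      exact hCDne (le_antisymm hCD (hCmax.le_of_ge h hCD))
    obtain ⟨x, hx, hx0⟩ := (Submodule.ne_bot_iff _).mp hDnt
    obtain ⟨hx1, hx2⟩ := Submodule.mem_inf.mp hx
    have hmk0 : C.mkQ x ≠ 0 := by
      intro h
      have hxc : x ∈ C := (Submodule.Quotient.mk_eq_zero C).mp (by simpa using h)
      have hxm : x ∈ C ⊓ N := Submodule.mem_inf.mpr ⟨hxc, hx2⟩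
      rw [hCN] at hxm
      exact hx0 ((Submodule.mem_bot _).mp hxm)
    exact (Submodule.ne_bot_iff _).mpr
      ⟨C.mkQ x, Submodule.mem_inf.mpr ⟨hx1, ⟨⟨x, hx2⟩, rfl⟩⟩, hmk0⟩
  -- extend the inclusion N ↪ Q along ψ
  obtain ⟨g, hg⟩ := hQinj.out ψ hψinj N.subtype
  have hginj : Function.Injective g := by
    rw [← LinearMap.ker_eq_bot]
    by_contra hker
    refine hess _ hker ?_
    rw [eq_bot_iff]
    intro z hz
    obtain ⟨hz1, hz2⟩ := Submodule.mem_inf.mp hz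
    obtain ⟨n, rfl⟩ := hz2
    have hn : (n : Q) = 0 := by
      have h1 := hg n
      rw [LinearMap.mem_ker.mp hz1] at h1
      exact h1.symm
    have : n = 0 := Subtype.ext hn
    simp [this]
  have hgψ : g ∘ₗ ψ = N.subtype := LinearMap.ext hg
  have hNle : N ≤ LinearMap.range g := fun n hn => ⟨ψ ⟨n, hn⟩, hg ⟨n, hn⟩⟩
  have hN's : LinearMap.range g ∈ s := by
    refine ⟨hA'N.trans hNle, fun X hX hX0 => ?_⟩
    have hXN : X ⊓ N ≠ ⊥ := by
      obtain ⟨x, hxX, hx0⟩ := (Submodule.ne_bot_iff X).mp hX0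
      obtain ⟨w, hw⟩ := hX hxX
      have hw0 : w ≠ 0 := by rintro rfl; rw [map_zero] at hw; exact hx0 hw.symm
      have hX0' : X.comap g ≠ ⊥ :=
        (Submodule.ne_bot_iff _).mpr ⟨w, by simp [Submodule.mem_comap, hw, hxX], hw0⟩
      obtain ⟨z, hz, hz0⟩ := (Submodule.ne_bot_iff _).mp (hess _ hX0')
      obtain ⟨hz1, hz2⟩ := Submodule.mem_inf.mp hz
      obtain ⟨n, rfl⟩ := hz2
      refine (Submodule.ne_bot_iff _).mpr
        ⟨g (ψ n), Submodule.mem_inf.mpr ⟨hz1, by rw [hg]; exact n.2⟩, ?_⟩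
      intro h
      exact hz0 (hginj (by simpa using h))
    have h2 := hNs.2 (X ⊓ N) inf_le_right hXN
    intro h
    apply h2
    rw [eq_bot_iff, ← h]
    exact inf_le_inf_right _ inf_le_left
  have hNeq : LinearMap.range g = N := le_antisymm (hNmax.le_of_ge hN's hNle) hNle
  have hψsurj : LinearMap.range ψ = ⊤ := by
    apply Submodule.map_injective_of_injective hginj
    rw [Submodule.map_top, hNeq, ← LinearMap.range_comp, hgψ, Submodule.range_subtype]
  have hsup : N ⊔ C = ⊤ := by
    rw [eq_top_iff]
    intro q _
    have : C.mkQ q ∈ LinearMap.range ψ := hψsurj ▸ Submodule.mem_top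
    obtain ⟨n, hn⟩ := this
    have hqn : q - (n : Q) ∈ C := by
      rw [← Submodule.Quotient.mk_eq_zero C, Submodule.Quotient.mk_sub]
      have hmk : (Submodule.Quotient.mk ((n : Q)) : Q ⧸ C) = Submodule.Quotient.mk q := hn
      rw [hmk, sub_self]
    have heq : q = (n : Q) + (q - (n : Q)) := by abel
    rw [heq]
    exact Submodule.add_mem_sup n.2 hqn
  have hcompl : IsCompl N C :=
    ⟨disjoint_iff.mpr (by rw [inf_comm]; exact hCN), codisjoint_iff.mpr hsup⟩
  have hNinj : Module.Injective R N :=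
    aux_injective_of_retract hQinj N.subtype (N.linearProjOfIsCompl C hcompl)
      (fun x => Submodule.linearProjOfIsCompl_apply_left hcompl x)
  refine ⟨N, inferInstance, inferInstance,
    LinearMap.codRestrict N j (fun a => hA'N (LinearMap.mem_range_self j a)),
    hNinj, ?_, ?_⟩
  · intro a b hab
    apply hj
    simpa [Subtype.ext_iff] using hab
  · intro X hX
    have hmap : Submodule.map N.subtype X ≠ ⊥ := by
      obtain ⟨x, hx, hx0⟩ := (Submodule.ne_bot_iff X).mp hX
      exact (Submodule.ne_bot_iff _).mpr
        ⟨x, ⟨x, hx, rfl⟩, fun h => hx0 (Subtype.ext h)⟩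
    have h2 := hNs.2 _ (Submodule.map_subtype_le N X) hmap
    obtain ⟨y, hy, hy0⟩ := (Submodule.ne_bot_iff _).mp h2
    obtain ⟨hy1, hy2⟩ := Submodule.mem_inf.mp hy
    obtain ⟨x₀, hx₀X, hx₀⟩ := hy1
    obtain ⟨a, ha⟩ := hy2
    refine (Submodule.ne_bot_iff _).mpr
      ⟨x₀, Submodule.mem_inf.mpr ⟨hx₀X, ⟨a, ?_⟩⟩, ?_⟩
    · apply Subtype.ext
      simpa [ha] using hx₀.symm
    · intro h
      apply hy0
      rw [← hx₀, h]
      rfl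


end Aux

/-- If `R` is a right H-ring, then every finitely generated module is
co-Kasch. -/
theorem stmt16 (R : Type u) [Ring R] (hH : IsHRing R) :
    ∀ (M : Type u) [AddCommGroup M] [Module R M], Module.Finite R M → IsCoKasch R M := by
  intro M _ _ hfin K S hS
  classical
  -- injective hull of S
  obtain ⟨E, instE1, instE2, iS, hE⟩ := aux_exists_hull R S
  -- extend iS along S ↪ M ⧸ K
  obtain ⟨g, hg⟩ := hE.1.out S.subtype (Submodule.injective_subtype S) iS
  set h : M →ₗ[R] E := g ∘ₗ K.mkQ with hh
  set N : Submodule R E := LinearMap.range h with hN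
  haveI : Module.Finite R N := Module.Finite.range h
  -- N is nontrivial
  haveI : Nontrivial S := IsSimpleModule.nontrivial R S
  obtain ⟨s₀, hs₀⟩ := exists_ne (0 : S)
  have hiS : iS s₀ ∈ N := by
    obtain ⟨m, hm⟩ := Submodule.mkQ_surjective K (s₀ : M ⧸ K)
    exact ⟨m, by rw [hh]; simp only [LinearMap.comp_apply]; rw [hm]; exact hg s₀⟩
  have hiS0 : iS s₀ ≠ 0 := fun hc => hs₀ (hE.2.1 (by simpa using hc))
  -- a maximal submodule of N
  obtain ⟨P, -, hP⟩ := aux_exists_coatom (⊥ : Submodule R N) (by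
    intro hbot
    have : (⟨iS s₀, hiS⟩ : N) ∈ (⊥ : Submodule R N) := hbot ▸ Submodule.mem_top
    exact hiS0 (by simpa [Subtype.ext_iff] using (Submodule.mem_bot R).mp this))
  haveI hT : IsSimpleModule R (N ⧸ P) := isSimpleModule_iff_isCoatom.mpr hP
  -- injective hull of the simple quotient T
  obtain ⟨F, instF1, instF2, iT, hF⟩ := aux_exists_hull R (N ⧸ P)
  -- extend iT ∘ mkQ along N ↪ E
  obtain ⟨f, hf⟩ := hF.1.out N.subtype (Submodule.injective_subtype N) (iT ∘ₗ P.mkQ)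
  -- f is nonzero
  have hf0 : f ≠ 0 := by
    obtain ⟨n, hn⟩ : ∃ n : N, n ∉ P := by
      by_contra hc
      push_neg at hc
      exact hP.1 (Submodule.eq_top_iff'.mpr hc)
    intro hzero
    have h1 : iT (P.mkQ n) = 0 := by
      have := hf n
      rw [hzero] at this
      simpa using this.symm
    have h2 : P.mkQ n = 0 := hF.2.1 (by simpa using h1)
    exact hn ((Submodule.Quotient.mk_eq_zero P).mp (by simpa using h2))
  -- by the H-ring property, S ≃ N ⧸ P
  have : ¬ IsEmpty (S ≃ₗ[R] (N ⧸ P)) := fun hemp =>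
    hf0 (hH S (N ⧸ P) E F hS hT hemp iS iT hE hF f)
  obtain ⟨e⟩ := not_isEmpty_iff.mp this
  -- assemble the surjection M → S
  refine ⟨(e.symm : (N ⧸ P) →ₗ[R] S) ∘ₗ P.mkQ ∘ₗ h.rangeRestrict, ?_⟩
  exact e.symm.surjective.comp ((Submodule.mkQ_surjective P).comp h.surjective_rangeRestrict)
end

section
/- A ring R is a right H-ring if and only if for every simple right R-module S, every simple subfactor of E(S) is isomorphic to S. -/
open CategoryTheory

lemma exists_embedding_into_injective (R : Type u) [Ring R] (M : Type u)
    [AddCommGroup M] [Module R M] :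
    ∃ (Q : Type u) (_ : AddCommGroup Q) (_ : Module R Q),
      Module.Injective R Q ∧ ∃ j : M →ₗ[R] Q, Function.Injective j := by
  let X := ModuleCat.of R M
  let J := CategoryTheory.Injective.under X
  refine ⟨J, inferInstance, inferInstance, ?_, ?_⟩
  · exact Module.injective_module_of_injective_object R J
      (inj := inferInstanceAs (CategoryTheory.Injective J))
  · exact ⟨(CategoryTheory.Injective.ι X).hom, (ModuleCat.mono_iff_injective _).mp inferInstance⟩


open Submodule LinearMap

-- essential extension helper
private lemma ess_trans {R : Type u} [Ring R] {Q : Type u} [AddCommGroup Q] [Module R Q]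
    {A B W : Submodule R Q} (h : A ⊓ B ≠ ⊥) (hA : A ≤ W) : W ⊓ B ≠ ⊥ :=
  fun h0 => h (le_bot_iff.mp (h0 ▸ inf_le_inf_right B hA))

lemma exists_injective_hull (R : Type u) [Ring R] (M : Type u)
    [AddCommGroup M] [Module R M] :
    ∃ (E : Type u) (_ : AddCommGroup E) (_ : Module R E) (i : M →ₗ[R] E),
      IsInjectiveHull R i := by
  obtain ⟨Q, _, _, hQ, j, hj⟩ := exists_embedding_into_injective R M
  -- Zorn 1: maximal essential extension E' of range j inside Q
  set s : Set (Submodule R Q) :=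
    {N | LinearMap.range j ≤ N ∧ ∀ W ≤ N, W ≠ ⊥ → W ⊓ LinearMap.range j ≠ ⊥} with hs
  have hrj : LinearMap.range j ∈ s := by
    refine ⟨le_rfl, fun W hW hWne => ?_⟩
    rwa [inf_eq_left.mpr hW]
  obtain ⟨E', -, hE'⟩ : ∃ E', LinearMap.range j ≤ E' ∧ Maximal (· ∈ s) E' := by
    refine zorn_le_nonempty₀ s ?_ _ hrj
    intro c hcs hchain y hy
    refine ⟨sSup c, ⟨le_trans (hcs hy).1 (le_sSup hy), ?_⟩, fun z hz => le_sSup hz⟩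
    intro W hW hWne
    obtain ⟨w, hwW, hw0⟩ := Submodule.ne_bot_iff W |>.mp hWne
    obtain ⟨N, hNc, hwN⟩ := (Submodule.mem_sSup_of_directed ⟨y, hy⟩
      (hchain.directedOn)).mp (hW hwW)
    have hspan : Submodule.span R {w} ⊓ LinearMap.range j ≠ ⊥ :=
      (hcs hNc).2 _ ((Submodule.span_singleton_le_iff_mem w N).mpr hwN)
        (by simpa [Submodule.span_singleton_eq_bot] using hw0)
    exact ess_trans hspan ((Submodule.span_singleton_le_iff_mem w W).mpr hwW)
  have hE's : E' ∈ s := hE'.1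
  -- Zorn 2: C maximal with C ⊓ E' = ⊥
  obtain ⟨C, -, hC⟩ : ∃ C, (⊥ : Submodule R Q) ≤ C ∧
      Maximal (fun C : Submodule R Q => C ⊓ E' = ⊥) C := by
    refine zorn_le_nonempty₀ _ ?_ ⊥ (bot_inf_eq E')
    intro c hcs hchain y hy
    refine ⟨sSup c, ?_, fun z hz => le_sSup hz⟩
    show sSup c ⊓ E' = ⊥
    rw [eq_bot_iff]
    rintro x ⟨hx1, hx2⟩
    obtain ⟨N, hNc, hxN⟩ := (Submodule.mem_sSup_of_directed ⟨y, hy⟩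
      (hchain.directedOn)).mp hx1
    exact (hcs hNc) ▸ Submodule.mem_inf.mpr ⟨hxN, hx2⟩
  -- the embedding E' → Q/C
  set ψ : E' →ₗ[R] Q ⧸ C := C.mkQ ∘ₗ E'.subtype with hψdef
  have hψinj : Function.Injective ψ := by
    rw [← LinearMap.ker_eq_bot, hψdef, LinearMap.ker_comp, Submodule.ker_mkQ, eq_bot_iff]
    rintro ⟨x, hxE⟩ hx
    simp only [Submodule.mem_comap, Submodule.subtype_apply] at hx
    have : x ∈ C ⊓ E' := ⟨hx, hxE⟩
    rw [hC.1] at this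
    simpa using this
  -- range ψ is essential in Q/C
  have hess : ∀ W : Submodule R (Q ⧸ C), W ≠ ⊥ → W ⊓ LinearMap.range ψ ≠ ⊥ := by
    intro W hWne
    set W' := Submodule.comap C.mkQ W with hW'
    have hCW' : C ≤ W' := fun x hx => by
      simp [hW', Submodule.mem_comap, (Submodule.Quotient.mk_eq_zero C).mpr hx,
        Submodule.mkQ_apply]
    have hCne : C ≠ W' := by
      intro hEq
      obtain ⟨w, hwW, hw0⟩ := Submodule.ne_bot_iff W |>.mp hWne
      obtain ⟨x, rfl⟩ := C.mkQ_surjective w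
      have : x ∈ W' := hwW
      rw [← hEq] at this
      exact hw0 (by simpa [Submodule.Quotient.mk_eq_zero] using this)
    have hW'E : W' ⊓ E' ≠ ⊥ := by
      intro h0
      exact hCne (le_antisymm hCW' (hC.2 h0 hCW'))
    obtain ⟨y, ⟨hyW', hyE'⟩, hy0⟩ := Submodule.ne_bot_iff _ |>.mp hW'E
    refine Submodule.ne_bot_iff _ |>.mpr ⟨C.mkQ y, ⟨hyW', ⟨⟨y, hyE'⟩, rfl⟩⟩, ?_⟩
    intro h0
    have : y ∈ C ⊓ E' := ⟨(Submodule.Quotient.mk_eq_zero C).mp h0, hyE'⟩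
    rw [hC.1] at this
    exact hy0 (by simpa using this)
  -- extend the inclusion E' → Q along ψ
  obtain ⟨g, hg⟩ := hQ.out ψ hψinj E'.subtype
  have hginj : Function.Injective g := by
    rw [← LinearMap.ker_eq_bot]
    by_contra hker
    obtain ⟨z, ⟨hz1, ⟨e, rfl⟩⟩, hz0⟩ := Submodule.ne_bot_iff _ |>.mp (hess _ hker)
    have h2 : (e : Q) = g (ψ e) := (hg e).symm
    have he0 : (e : Q) = 0 := by rw [h2]; exact LinearMap.mem_ker.mp hz1
    have : e = 0 := Subtype.ext (by simpa using he0)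
    exact hz0 (by rw [this, map_zero])
  have hE'le : E' ≤ LinearMap.range g := fun e he => ⟨ψ ⟨e, he⟩, hg ⟨e, he⟩⟩
  -- range g is an essential extension of range j, so equals E' by maximality
  have hrange : LinearMap.range g = E' := by
    refine le_antisymm (hE'.2 ⟨le_trans hE's.1 hE'le, ?_⟩ hE'le) hE'le
    intro W hW hWne
    have hW0 : Submodule.comap g W ≠ ⊥ := by
      obtain ⟨w, hwW, hw0⟩ := Submodule.ne_bot_iff W |>.mp hWne
      obtain ⟨x, rfl⟩ := hW hwW
      exact Submodule.ne_bot_iff _ |>.mpr ⟨x, hwW, fun h0 => hw0 (by rw [h0]; simp)⟩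
    obtain ⟨z, ⟨hz1, ⟨e, rfl⟩⟩, hz0⟩ := Submodule.ne_bot_iff _ |>.mp (hess _ hW0)
    have hWE' : W ⊓ E' ≠ ⊥ := by
      refine Submodule.ne_bot_iff _ |>.mpr ⟨g (ψ e), ⟨hz1, by rw [hg]; exact e.2⟩, ?_⟩
      intro h0
      exact hz0 (hginj (by simpa using h0))
    exact ess_trans (hE's.2 _ inf_le_right hWE') inf_le_left
  -- the retraction π : Q → E'
  have hπmem : ∀ q : Q, g (C.mkQ q) ∈ E' := fun q => hrange ▸ ⟨C.mkQ q, rfl⟩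
  set π : Q →ₗ[R] E' := LinearMap.codRestrict E' (g ∘ₗ C.mkQ) hπmem with hπdef
  have hπid : ∀ e : E', π (e : Q) = e := by
    intro e
    apply Subtype.ext
    show g (C.mkQ (e : Q)) = (e : Q)
    exact hg e
  -- E' is injective
  have hE'inj : Module.Injective R E' := by
    constructor
    intro X Y _ _ _ _ f hf g₀
    obtain ⟨h, hh⟩ := hQ.out f hf (E'.subtype ∘ₗ g₀)
    refine ⟨π ∘ₗ h, fun x => ?_⟩
    show π (h (f x)) = g₀ x
    rw [hh x]
    exact hπid (g₀ x)
  -- the hull map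
  refine ⟨E', inferInstance, inferInstance,
    LinearMap.codRestrict E' j (fun m => hE's.1 ⟨m, rfl⟩), hE'inj, ?_, ?_⟩
  · intro a b hab
    exact hj (congrArg Subtype.val hab)
  · intro N hNne
    set i := LinearMap.codRestrict E' j (fun m => hE's.1 ⟨m, rfl⟩) with hidef
    have hmapne : N.map E'.subtype ≠ ⊥ := by
      obtain ⟨n, hnN, hn0⟩ := Submodule.ne_bot_iff N |>.mp hNne
      exact Submodule.ne_bot_iff _ |>.mpr ⟨n, ⟨n, hnN, rfl⟩,
        fun h0 => hn0 (Subtype.ext h0)⟩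
    obtain ⟨x, ⟨⟨n, hnN, rfl⟩, ⟨m, hm⟩⟩, hx0⟩ := Submodule.ne_bot_iff _ |>.mp
      (hE's.2 _ (Submodule.map_subtype_le E' N) hmapne)
    refine Submodule.ne_bot_iff _ |>.mpr ⟨n, ⟨hnN, ⟨m, ?_⟩⟩,
      fun h0 => hx0 (by rw [h0]; simp)⟩
    have hm' : j m = (n : Q) := by simpa using hm
    exact Subtype.ext hm'
/-- `R` is a right H-ring iff for every simple module `S` and every
injective hull `E` of `S`, every simple subfactor of `E` is isomorphic to `S`. -/
theorem stmt18 (R : Type u) [Ring R] :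
    IsHRing R ↔
      ∀ (S E : Type u) [AddCommGroup S] [Module R S] [AddCommGroup E] [Module R E],
        IsSimpleModule R S → ∀ i : S →ₗ[R] E, IsInjectiveHull R i →
          ∀ (K : Submodule R E) (U : Submodule R (E ⧸ K)), IsSimpleModule R U →
            Nonempty (U ≃ₗ[R] S) := by
  constructor
  · -- H-ring implies every simple subfactor of E(S) is isomorphic to S
    intro h S E _ _ _ _ hS i hi K U hU
    by_contra hne
    obtain ⟨E₂, _, _, i₂, hi₂⟩ := exists_injective_hull R U
    set V := Submodule.comap K.mkQ U with hV
    have hres : ∀ x ∈ V, K.mkQ x ∈ U := fun x hx => hx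
    set ρ : V →ₗ[R] U := K.mkQ.restrict hres with hρ
    obtain ⟨f, hf⟩ := hi₂.1.out V.subtype V.injective_subtype (i₂ ∘ₗ ρ)
    haveI : IsSimpleModule R U := hU
    haveI : Nontrivial U := IsSimpleModule.nontrivial R U
    obtain ⟨u, hu⟩ := exists_ne (0 : U)
    obtain ⟨v, hv⟩ := K.mkQ_surjective (u : E ⧸ K)
    have hvV : v ∈ V := by rw [hV, Submodule.mem_comap, hv]; exact u.2
    have hρu : ρ ⟨v, hvV⟩ = u := Subtype.ext hv
    have hfv : f v = i₂ u := by
      have h1 : f v = i₂ (ρ ⟨v, hvV⟩) := hf ⟨v, hvV⟩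
      rw [h1, hρu]
    have hfne : f ≠ 0 := by
      intro h0
      have h1 : i₂ u = 0 := by rw [← hfv, h0]; simp
      exact hu (hi₂.2.1 (h1.trans (map_zero i₂).symm))
    have hemp : IsEmpty (S ≃ₗ[R] U) := ⟨fun e => hne ⟨e.symm⟩⟩
    exact hfne (h S U E E₂ hS hU hemp i i₂ hi hi₂ f)
  · -- converse
    intro h S₁ S₂ E₁ E₂ _ _ _ _ _ _ _ _ hS₁ hS₂ hne i₁ i₂ h₁ h₂ f
    by_contra hf
    have hrf : LinearMap.range f ≠ ⊥ := fun h0 => hf (LinearMap.range_eq_bot.mp h0)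
    have h1 : LinearMap.range f ⊓ LinearMap.range i₂ ≠ ⊥ := h₂.2.2 _ hrf
    haveI : IsSimpleModule R S₂ := hS₂
    haveI hsimp : IsSimpleModule R (LinearMap.range i₂) :=
      IsSimpleModule.congr (LinearEquiv.ofInjective i₂ h₂.2.1).symm
    have hatom : IsAtom (LinearMap.range i₂) := isSimpleModule_iff_isAtom.mp hsimp
    have hle : LinearMap.range i₂ ≤ LinearMap.range f := by
      rcases lt_or_eq_of_le
          (inf_le_right : LinearMap.range f ⊓ LinearMap.range i₂ ≤ _) with hlt | heq
      · exact absurd (hatom.2 _ hlt) h1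
      · exact inf_eq_right.mp heq
    set φ := (LinearMap.ker f).liftQ f le_rfl with hφ
    have hφinj : Function.Injective φ := by
      rw [← LinearMap.ker_eq_bot]
      exact Submodule.ker_liftQ_eq_bot _ _ _ le_rfl
    have hφr : LinearMap.range φ = LinearMap.range f := Submodule.range_liftQ _ _ _
    set U := Submodule.comap φ (LinearMap.range i₂) with hUdef
    have hmap : U.map φ = LinearMap.range i₂ := by
      rw [hUdef, Submodule.map_comap_eq, hφr, inf_eq_right.mpr hle]
    have e : (U : Type u) ≃ₗ[R] S₂ :=
      ((Submodule.equivMapOfInjective φ hφinj U).trans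
        (LinearEquiv.ofEq _ _ hmap)).trans (LinearEquiv.ofInjective i₂ h₂.2.1).symm
    haveI : IsSimpleModule R U := IsSimpleModule.congr e
    obtain ⟨e'⟩ := h S₁ E₁ hS₁ i₁ h₁ (LinearMap.ker f) U this
    exact hne.false (e'.symm.trans e)
end
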